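/- Let δ > 0, l > 0 and a₀, a₁, a₂ ∈ ℝ, and define on the closed disk D_δ ⊂ ℝ² the micromodulus c₀(ξ) = (a₀ + a₁ cos 2θ + a₂ cos 4θ) e^{−|ξ|/l}, where θ is the angle between ξ and the first coordinate axis. Set R = ∫₀^δ r³ e^{−r/l} dr. Then the components of the effective elastic tensor A_{ijkl} = (1/2) ∫_{D_δ} c₀(ξ) ξ_i ξ_j ξ_k ξ_l / |ξ|² dξ are: A_{1111} = (R/2)( (3π/4) a₀ + (π/2) a₁ + (π/8) a₂ ), A_{2222} = (R/2)( (3π/4) a₀ − (π/2) a₁ + (π/8) a₂ ), and A_{1122} = A_{1212} = (R/2)( (π/4) a₀ − (π/8) a₂ ). In particular, if a₁ = a₂ = 0 the resulting tensor is isotropic. -/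

import Mathlib

open MeasureTheory Real Set

private lemma pdk_cos_int (k : ℝ) (hk : k ≠ 0) (hs : Real.sin (k * π) = 0) :
    ∫ φ in (-π)..π, Real.cos (k * φ) = 0 := by
  rw [intervalIntegral.integral_comp_mul_left (fun x => Real.cos x) hk, integral_cos]
  have h2 : Real.sin (k * -π) = 0 := by rw [mul_neg, Real.sin_neg, hs, neg_zero]
  rw [hs, h2, sub_zero, smul_zero]

private lemma pdk_sin_mul_pi (n : ℕ) : Real.sin ((n : ℝ) * π) = 0 := by
  have := Real.sin_int_mul_pi (n : ℤ)
  push_cast at this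
  exact this

private lemma pdk_fourier (b0 b2 b4 b6 b8 : ℝ) :
    ∫ φ in (-π)..π, (b0 + b2 * Real.cos (2*φ) + b4 * Real.cos (4*φ)
      + b6 * Real.cos (6*φ) + b8 * Real.cos (8*φ)) = 2 * π * b0 := by
  have ik : ∀ (b k : ℝ), IntervalIntegrable (fun φ => b * Real.cos (k*φ)) volume (-π) π :=
    fun b k => (continuous_const.mul (Real.continuous_cos.comp
      (continuous_const.mul continuous_id))).intervalIntegrable _ _
  have ic : IntervalIntegrable (fun _ : ℝ => b0) volume (-π) π :=
    intervalIntegrable_const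
  have hint : ∀ (b : ℝ) (k : ℕ), k ≠ 0 → (∫ φ in (-π)..π, b * Real.cos ((k:ℝ)*φ)) = 0 := by
    intro b k hk
    rw [intervalIntegral.integral_const_mul,
      pdk_cos_int (k:ℝ) (by exact_mod_cast hk) (pdk_sin_mul_pi k), mul_zero]
  rw [intervalIntegral.integral_add (((ic.add (ik b2 2)).add (ik b4 4)).add (ik b6 6)) (ik b8 8),
    intervalIntegral.integral_add ((ic.add (ik b2 2)).add (ik b4 4)) (ik b6 6),
    intervalIntegral.integral_add (ic.add (ik b2 2)) (ik b4 4),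
    intervalIntegral.integral_add ic (ik b2 2)]
  have h2 := hint b2 2 (by norm_num)
  have h4 := hint b4 4 (by norm_num)
  have h6 := hint b6 6 (by norm_num)
  have h8 := hint b8 8 (by norm_num)
  push_cast at h2 h4 h6 h8
  rw [h2, h4, h6, h8, intervalIntegral.integral_const, smul_eq_mul]
  ring

private lemma pdk_odd (f : ℝ → ℝ) (hf : ∀ x, f (-x) = - f x) :
    ∫ φ in (-π)..π, f φ = 0 := by
  have h := intervalIntegral.integral_comp_neg (a := -π) (b := π) f
  rw [neg_neg] at h
  simp only [hf] at h
  rw [intervalIntegral.integral_neg] at h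
  linarith

private lemma pdk_cheb2 (x : ℝ) : Real.cos (2*x) = 2 * Real.cos x ^ 2 - 1 :=
  Real.cos_two_mul x

private lemma pdk_cheb4 (x : ℝ) : Real.cos (4*x) = 2*(2 * Real.cos x ^ 2 - 1)^2 - 1 := by
  rw [show (4:ℝ)*x = 2*(2*x) by ring, Real.cos_two_mul, Real.cos_two_mul]

private lemma pdk_cheb6 (x : ℝ) : Real.cos (6*x) = 2*(4 * Real.cos x ^ 3 - 3 * Real.cos x)^2 - 1 := by
  rw [show (6:ℝ)*x = 2*(3*x) by ring, Real.cos_two_mul, Real.cos_three_mul]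

private lemma pdk_cheb8 (x : ℝ) :
    Real.cos (8*x) = 2*(2*(2 * Real.cos x ^ 2 - 1)^2 - 1)^2 - 1 := by
  rw [show (8:ℝ)*x = 2*(4*x) by ring, Real.cos_two_mul, pdk_cheb4]

private lemma pdk_ang40 (a₀ a₁ a₂ : ℝ) :
    (∫ φ in (-π)..π, (a₀ + a₁ * Real.cos (2*φ) + a₂ * Real.cos (4*φ))
      * Real.cos φ ^ 4 * Real.sin φ ^ 0)
    = 3*π/4*a₀ + π/2*a₁ + π/8*a₂ := by
  have key : ∀ x:ℝ, (a₀ + a₁ * Real.cos (2*x) + a₂ * Real.cos (4*x))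
      * Real.cos x ^ 4 * Real.sin x ^ 0
      = ((3/8*a₀+1/4*a₁+1/16*a₂) + (1/2*a₀+7/16*a₁+1/4*a₂) * Real.cos (2*x)
        + (1/8*a₀+1/4*a₁+3/8*a₂) * Real.cos (4*x) + (1/16*a₁+1/4*a₂) * Real.cos (6*x)
        + (1/16*a₂) * Real.cos (8*x)) := by
    intro x
    rw [pdk_cheb2, pdk_cheb4, pdk_cheb6, pdk_cheb8]
    ring
  rw [intervalIntegral.integral_congr (fun x _ => key x), pdk_fourier]
  ring

private lemma pdk_ang04 (a₀ a₁ a₂ : ℝ) :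
    (∫ φ in (-π)..π, (a₀ + a₁ * Real.cos (2*φ) + a₂ * Real.cos (4*φ))
      * Real.cos φ ^ 0 * Real.sin φ ^ 4)
    = 3*π/4*a₀ - π/2*a₁ + π/8*a₂ := by
  have key : ∀ x:ℝ, (a₀ + a₁ * Real.cos (2*x) + a₂ * Real.cos (4*x))
      * Real.cos x ^ 0 * Real.sin x ^ 4
      = ((3/8*a₀-1/4*a₁+1/16*a₂) + (-(1/2)*a₀+7/16*a₁-1/4*a₂) * Real.cos (2*x)
        + (1/8*a₀-1/4*a₁+3/8*a₂) * Real.cos (4*x) + (1/16*a₁-1/4*a₂) * Real.cos (6*x)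
        + (1/16*a₂) * Real.cos (8*x)) := by
    intro x
    rw [show Real.sin x ^ 4 = (1 - Real.cos x ^ 2)^2 by rw [← Real.sin_sq]; ring,
      pdk_cheb2, pdk_cheb4, pdk_cheb6, pdk_cheb8]
    ring
  rw [intervalIntegral.integral_congr (fun x _ => key x), pdk_fourier]
  ring

private lemma pdk_ang22 (a₀ a₁ a₂ : ℝ) :
    (∫ φ in (-π)..π, (a₀ + a₁ * Real.cos (2*φ) + a₂ * Real.cos (4*φ))
      * Real.cos φ ^ 2 * Real.sin φ ^ 2)
    = π/4*a₀ - π/8*a₂ := by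
  have key : ∀ x:ℝ, (a₀ + a₁ * Real.cos (2*x) + a₂ * Real.cos (4*x))
      * Real.cos x ^ 2 * Real.sin x ^ 2
      = ((1/8*a₀-1/16*a₂) + (1/16*a₁) * Real.cos (2*x)
        + (-(1/8)*a₀+1/8*a₂) * Real.cos (4*x) + (-(1/16)*a₁) * Real.cos (6*x)
        + (-(1/16)*a₂) * Real.cos (8*x)) := by
    intro x
    rw [Real.sin_sq, pdk_cheb2, pdk_cheb4, pdk_cheb6, pdk_cheb8]
    ring
  rw [intervalIntegral.integral_congr (fun x _ => key x), pdk_fourier]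
  ring

private lemma pdk_ang31 (a₀ a₁ a₂ : ℝ) :
    (∫ φ in (-π)..π, (a₀ + a₁ * Real.cos (2*φ) + a₂ * Real.cos (4*φ))
      * Real.cos φ ^ 3 * Real.sin φ ^ 1) = 0 := by
  apply pdk_odd
  intro x
  simp only [mul_neg, Real.cos_neg, Real.sin_neg]
  ring

private lemma pdk_ang13 (a₀ a₁ a₂ : ℝ) :
    (∫ φ in (-π)..π, (a₀ + a₁ * Real.cos (2*φ) + a₂ * Real.cos (4*φ))
      * Real.cos φ ^ 1 * Real.sin φ ^ 3) = 0 := by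
  apply pdk_odd
  intro x
  simp only [mul_neg, Real.cos_neg, Real.sin_neg]
  ring


private lemma pdk_master (δ l a₀ a₁ a₂ : ℝ) (hδ : 0 < δ)
    (θ : EuclideanSpace ℝ (Fin 2) → ℝ)
    (hθ : ∀ ξ : EuclideanSpace ℝ (Fin 2), θ ξ = Real.arccos (ξ 0 / ‖ξ‖))
    (c₀ : EuclideanSpace ℝ (Fin 2) → ℝ)
    (hc : ∀ ξ : EuclideanSpace ℝ (Fin 2),
      c₀ ξ = (a₀ + a₁ * Real.cos (2 * θ ξ) + a₂ * Real.cos (4 * θ ξ))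
        * Real.exp (-‖ξ‖ / l))
    (n₁ n₂ : ℕ) (hn : n₁ + n₂ = 4) :
    (∫ ξ in Metric.closedBall (0 : EuclideanSpace ℝ (Fin 2)) δ,
        c₀ ξ * (ξ 0) ^ n₁ * (ξ 1) ^ n₂ / ‖ξ‖ ^ 2)
    = (∫ r in (0:ℝ)..δ, r ^ 3 * Real.exp (-r / l)) *
      ∫ φ in (-π)..π, (a₀ + a₁ * Real.cos (2*φ) + a₂ * Real.cos (4*φ))
        * Real.cos φ ^ n₁ * Real.sin φ ^ n₂ := by
  set nm : ℝ × ℝ → ℝ := fun p => Real.sqrt (p.1^2 + p.2^2) with hnm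
  set F : ℝ × ℝ → ℝ := fun p =>
    ((a₀ + a₁ * Real.cos (2 * Real.arccos (p.1 / nm p))
      + a₂ * Real.cos (4 * Real.arccos (p.1 / nm p))) * Real.exp (-(nm p) / l))
      * p.1 ^ n₁ * p.2 ^ n₂ / (nm p) ^ 2 with hF
  set S : Set (ℝ × ℝ) := {p | nm p ≤ δ} with hSdef
  have hnmcont : Continuous nm := by
    apply Real.continuous_sqrt.comp
    fun_prop
  have hS : MeasurableSet S := hnmcont.measurable measurableSet_Iic
  have hnorm : ∀ ξ : EuclideanSpace ℝ (Fin 2), ‖ξ‖ = nm (ξ 0, ξ 1) := by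
    intro ξ; rw [EuclideanSpace.norm_eq]; simp [Fin.sum_univ_two, Real.norm_eq_abs, sq_abs, hnm]
  -- Step A: to indicator on ℝ × ℝ through the pointwise bridge
  have stepA : (∫ ξ in Metric.closedBall (0 : EuclideanSpace ℝ (Fin 2)) δ,
        c₀ ξ * (ξ 0) ^ n₁ * (ξ 1) ^ n₂ / ‖ξ‖ ^ 2)
      = ∫ ξ : EuclideanSpace ℝ (Fin 2), S.indicator F (ξ 0, ξ 1) := by
    rw [← integral_indicator (measurableSet_closedBall)]
    refine integral_congr_ae (Filter.Eventually.of_forall fun ξ => ?_)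
    by_cases hmem : ξ ∈ Metric.closedBall (0 : EuclideanSpace ℝ (Fin 2)) δ
    · have hmem' : (ξ 0, ξ 1) ∈ S := by
        rw [Metric.mem_closedBall, dist_zero_right, hnorm] at hmem
        exact hmem
      simp only [Set.indicator_of_mem hmem, Set.indicator_of_mem hmem']
      rw [hc, hθ, hF]
      simp only [hnorm ξ]
    · have hmem' : (ξ 0, ξ 1) ∉ S := by
        rw [Metric.mem_closedBall, dist_zero_right, hnorm] at hmem
        exact hmem
      simp only [Set.indicator_of_notMem hmem, Set.indicator_of_notMem hmem']
  -- Step B: push through the measurable equivalence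
  have stepB : (∫ ξ : EuclideanSpace ℝ (Fin 2), S.indicator F (ξ 0, ξ 1))
      = ∫ p : ℝ × ℝ, S.indicator F p := by
    exact ((volume_preserving_finTwoArrow ℝ).comp
      (EuclideanSpace.volume_preserving_symm_measurableEquiv_toLp (Fin 2))).integral_comp
      ((MeasurableEquiv.toLp 2 (Fin 2 → ℝ)).symm.trans
        (MeasurableEquiv.finTwoArrow)).measurableEmbedding (S.indicator F)
  -- Step C/D: polar coordinates
  have stepC : (∫ p : ℝ × ℝ, S.indicator F p)
      = ∫ p in Set.Ioi (0:ℝ) ×ˢ Set.Ioo (-π) π,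
          (Set.indicator (Set.Iic δ) (fun r => r ^ 3 * Real.exp (-r / l)) p.1) *
          ((a₀ + a₁ * Real.cos (2*p.2) + a₂ * Real.cos (4*p.2))
            * Real.cos p.2 ^ n₁ * Real.sin p.2 ^ n₂) := by
    rw [← integral_comp_polarCoord_symm (S.indicator F), polarCoord_target]
    refine setIntegral_congr_fun (by measurability) ?_
    rintro ⟨r, φ⟩ hp
    obtain ⟨hr, hφ⟩ := hp
    have hr0 : (0:ℝ) < r := hr
    have hφ1 : -π < φ := hφ.1
    have hφ2 : φ < π := hφ.2
    have hsymm : polarCoord.symm (r, φ) = (r * Real.cos φ, r * Real.sin φ) :=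
      polarCoord_symm_apply _
    have hnr : nm (r * Real.cos φ, r * Real.sin φ) = r := by
      rw [hnm]
      simp only
      rw [show (r * Real.cos φ)^2 + (r * Real.sin φ)^2 = r^2 by
        have := Real.sin_sq_add_cos_sq φ; nlinarith [this], Real.sqrt_sq hr0.le]
    have harc : Real.arccos (r * Real.cos φ / r) = |φ| := by
      rw [mul_comm, mul_div_assoc, div_self hr0.ne', mul_one]
      rcases le_or_gt 0 φ with h | h
      · rw [abs_of_nonneg h]; exact Real.arccos_cos h hφ2.le
      · rw [abs_of_neg h, ← Real.cos_neg]
        exact Real.arccos_cos (by linarith) (by linarith)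
    have hcabs : ∀ k : ℝ, Real.cos (k * |φ|) = Real.cos (k * φ) := by
      intro k
      rcases abs_choice φ with h | h
      · rw [h]
      · rw [h, mul_neg, Real.cos_neg]
    have hr4 : r ^ n₁ * r ^ n₂ = r ^ 4 := by rw [← pow_add, hn]
    simp only [hsymm]
    by_cases hrδ : r ≤ δ
    · have hm1 : (r * Real.cos φ, r * Real.sin φ) ∈ S := by
        rw [hSdef]; exact le_of_eq_of_le hnr hrδ
      have hm2 : r ∈ Set.Iic δ := hrδ
      rw [Set.indicator_of_mem hm1, Set.indicator_of_mem hm2, hF]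
      simp only [hnr, harc, hcabs]
      rw [smul_eq_mul, mul_pow, mul_pow,
        show (a₀ + a₁ * Real.cos (2*φ) + a₂ * Real.cos (4*φ)) * Real.exp (-r / l)
            * (r ^ n₁ * Real.cos φ ^ n₁) * (r ^ n₂ * Real.sin φ ^ n₂)
          = (r ^ n₁ * r ^ n₂) * ((a₀ + a₁ * Real.cos (2*φ) + a₂ * Real.cos (4*φ))
              * Real.exp (-r / l) * Real.cos φ ^ n₁ * Real.sin φ ^ n₂) from by ring,
        hr4]
      field_simp
    · have hm1 : (r * Real.cos φ, r * Real.sin φ) ∉ S := by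
        rw [hSdef]
        simp only [Set.mem_setOf_eq, hnr]
        exact hrδ
      have hm2 : r ∉ Set.Iic δ := hrδ
      rw [Set.indicator_of_notMem hm1, Set.indicator_of_notMem hm2, smul_zero, zero_mul]
  -- Step E/F/G: separate variables
  rw [stepA, stepB, stepC, Measure.volume_eq_prod,
    setIntegral_prod_mul (fun r => (Set.Iic δ).indicator (fun r => r ^ 3 * Real.exp (-r / l)) r)
      (fun φ => (a₀ + a₁ * Real.cos (2*φ) + a₂ * Real.cos (4*φ))
        * Real.cos φ ^ n₁ * Real.sin φ ^ n₂) (Set.Ioi 0) (Set.Ioo (-π) π),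
    setIntegral_indicator measurableSet_Iic, Set.Ioi_inter_Iic,
    ← intervalIntegral.integral_of_le hδ.le]
  congr 1
  rw [intervalIntegral.integral_of_le (by linarith [Real.pi_pos] : -π ≤ π),
    integral_Ioc_eq_integral_Ioo]


/-- For the paper's anisotropic exponential planar micromodulus
`c₀(ξ) = (a₀ + a₁ cos 2θ + a₂ cos 4θ) e^{−|ξ|/l}` on the disk `D_δ`, with
`R = ∫₀^δ r³ e^{−r/l} dr`, the components of the effective elastic tensor are
`A₁₁₁₁ = (R/2)((3π/4)a₀ + (π/2)a₁ + (π/8)a₂)`,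
`A₂₂₂₂ = (R/2)((3π/4)a₀ − (π/2)a₁ + (π/8)a₂)`,
`A₁₁₂₂ = A₁₂₁₂ = (R/2)((π/4)a₀ − (π/8)a₂)`;
in particular, if `a₁ = a₂ = 0` the tensor is isotropic. -/
theorem pd_exponential_micromodulus_tensor_2d
    (δ l : ℝ) (hδ : 0 < δ) (hl : 0 < l)
    (a₀ a₁ a₂ : ℝ)
    (θ : EuclideanSpace ℝ (Fin 2) → ℝ)
    (hθ : ∀ ξ : EuclideanSpace ℝ (Fin 2), θ ξ = Real.arccos (ξ 0 / ‖ξ‖))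
    (c₀ : EuclideanSpace ℝ (Fin 2) → ℝ)
    (hc : ∀ ξ : EuclideanSpace ℝ (Fin 2),
      c₀ ξ = (a₀ + a₁ * Real.cos (2 * θ ξ) + a₂ * Real.cos (4 * θ ξ))
        * Real.exp (-‖ξ‖ / l))
    (R : ℝ)
    (hR : R = ∫ r in (0 : ℝ)..δ, r ^ 3 * Real.exp (-r / l))
    (A : Fin 2 → Fin 2 → Fin 2 → Fin 2 → ℝ)
    (hA : ∀ i j k l', A i j k l' = (1 / 2) *
      ∫ ξ in Metric.closedBall (0 : EuclideanSpace ℝ (Fin 2)) δ,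
        c₀ ξ * ξ i * ξ j * ξ k * ξ l' / ‖ξ‖ ^ 2) :
    A 0 0 0 0 = R / 2 * (3 * Real.pi / 4 * a₀ + Real.pi / 2 * a₁ + Real.pi / 8 * a₂) ∧
    A 1 1 1 1 = R / 2 * (3 * Real.pi / 4 * a₀ - Real.pi / 2 * a₁ + Real.pi / 8 * a₂) ∧
    A 0 0 1 1 = R / 2 * (Real.pi / 4 * a₀ - Real.pi / 8 * a₂) ∧
    A 0 1 0 1 = R / 2 * (Real.pi / 4 * a₀ - Real.pi / 8 * a₂) ∧
    (a₁ = 0 → a₂ = 0 → ∃ lam mu : ℝ, ∀ i j k l',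
      A i j k l' = lam * (if i = j then (1 : ℝ) else 0) * (if k = l' then (1 : ℝ) else 0)
        + mu * ((if i = k then (1 : ℝ) else 0) * (if j = l' then (1 : ℝ) else 0)
          + (if i = l' then (1 : ℝ) else 0) * (if j = k then (1 : ℝ) else 0))) := by
  have comp : ∀ (n₁ n₂ : ℕ), n₁ + n₂ = 4 → ∀ i j k l' : Fin 2,
      (∀ ξ : EuclideanSpace ℝ (Fin 2), ξ i * ξ j * ξ k * ξ l' = ξ 0 ^ n₁ * ξ 1 ^ n₂) →
      A i j k l' = 1/2 * (R * ∫ φ in (-π)..π,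
        (a₀ + a₁ * Real.cos (2*φ) + a₂ * Real.cos (4*φ))
          * Real.cos φ ^ n₁ * Real.sin φ ^ n₂) := by
    intro n₁ n₂ hn i j k l' hm
    rw [hA]
    have hpt : ∀ ξ : EuclideanSpace ℝ (Fin 2),
        c₀ ξ * ξ i * ξ j * ξ k * ξ l' / ‖ξ‖ ^ 2 = c₀ ξ * ξ 0 ^ n₁ * ξ 1 ^ n₂ / ‖ξ‖ ^ 2 := by
      intro ξ
      rw [show c₀ ξ * ξ i * ξ j * ξ k * ξ l' = c₀ ξ * (ξ i * ξ j * ξ k * ξ l') from by ring,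
        hm ξ]
      ring
    simp only [hpt]
    rw [pdk_master δ l a₀ a₁ a₂ hδ θ hθ c₀ hc n₁ n₂ hn, hR]
  refine ⟨?_, ?_, ?_, ?_, ?_⟩
  · rw [comp 4 0 (by norm_num) 0 0 0 0 (fun ξ => by ring), pdk_ang40]; ring
  · rw [comp 0 4 (by norm_num) 1 1 1 1 (fun ξ => by ring), pdk_ang04]; ring
  · rw [comp 2 2 (by norm_num) 0 0 1 1 (fun ξ => by ring), pdk_ang22]; ring
  · rw [comp 2 2 (by norm_num) 0 1 0 1 (fun ξ => by ring), pdk_ang22]; ring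
  · intro h1 h2
    subst h1; subst h2
    refine ⟨R/2 * (π/4 * a₀), R/2 * (π/4 * a₀), ?_⟩
    intro i j k l'
    have e00 : (if (0 : Fin 2) = 0 then (1:ℝ) else 0) = 1 := if_pos rfl
    have e11 : (if (1 : Fin 2) = 1 then (1:ℝ) else 0) = 1 := if_pos rfl
    have e01 : (if (0 : Fin 2) = 1 then (1:ℝ) else 0) = 0 := if_neg (by decide)
    have e10 : (if (1 : Fin 2) = 0 then (1:ℝ) else 0) = 0 := if_neg (by decide)
    have hfin : ∀ m : Fin 2, m = 0 ∨ m = 1 := by decide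
    rcases hfin i with hi | hi <;> rcases hfin j with hj | hj <;>
      rcases hfin k with hk | hk <;> rcases hfin l' with hl | hl <;>
      subst hi <;> subst hj <;> subst hk <;> subst hl
    · rw [comp 4 0 (by norm_num) 0 0 0 0 (fun ξ => by ring), pdk_ang40]
      simp only [e00, e01, e10, e11, eq_self_iff_true, if_true]
      ring
    · rw [comp 3 1 (by norm_num) 0 0 0 1 (fun ξ => by ring), pdk_ang31]
      simp only [e00, e01, e10, e11, eq_self_iff_true, if_true]
      ring
    · rw [comp 3 1 (by norm_num) 0 0 1 0 (fun ξ => by ring), pdk_ang31]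
      simp only [e00, e01, e10, e11, eq_self_iff_true, if_true]
      ring
    · rw [comp 2 2 (by norm_num) 0 0 1 1 (fun ξ => by ring), pdk_ang22]
      simp only [e00, e01, e10, e11, eq_self_iff_true, if_true]
      ring
    · rw [comp 3 1 (by norm_num) 0 1 0 0 (fun ξ => by ring), pdk_ang31]
      simp only [e00, e01, e10, e11, eq_self_iff_true, if_true]
      ring
    · rw [comp 2 2 (by norm_num) 0 1 0 1 (fun ξ => by ring), pdk_ang22]
      simp only [e00, e01, e10, e11, eq_self_iff_true, if_true]
      ring
    · rw [comp 2 2 (by norm_num) 0 1 1 0 (fun ξ => by ring), pdk_ang22]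
      simp only [e00, e01, e10, e11, eq_self_iff_true, if_true]
      ring
    · rw [comp 1 3 (by norm_num) 0 1 1 1 (fun ξ => by ring), pdk_ang13]
      simp only [e00, e01, e10, e11, eq_self_iff_true, if_true]
      ring
    · rw [comp 3 1 (by norm_num) 1 0 0 0 (fun ξ => by ring), pdk_ang31]
      simp only [e00, e01, e10, e11, eq_self_iff_true, if_true]
      ring
    · rw [comp 2 2 (by norm_num) 1 0 0 1 (fun ξ => by ring), pdk_ang22]
      simp only [e00, e01, e10, e11, eq_self_iff_true, if_true]
      ring
    · rw [comp 2 2 (by norm_num) 1 0 1 0 (fun ξ => by ring), pdk_ang22]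
      simp only [e00, e01, e10, e11, eq_self_iff_true, if_true]
      ring
    · rw [comp 1 3 (by norm_num) 1 0 1 1 (fun ξ => by ring), pdk_ang13]
      simp only [e00, e01, e10, e11, eq_self_iff_true, if_true]
      ring
    · rw [comp 2 2 (by norm_num) 1 1 0 0 (fun ξ => by ring), pdk_ang22]
      simp only [e00, e01, e10, e11, eq_self_iff_true, if_true]
      ring
    · rw [comp 1 3 (by norm_num) 1 1 0 1 (fun ξ => by ring), pdk_ang13]
      simp only [e00, e01, e10, e11, eq_self_iff_true, if_true]
      ring
    · rw [comp 1 3 (by norm_num) 1 1 1 0 (fun ξ => by ring), pdk_ang13]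
      simp only [e00, e01, e10, e11, eq_self_iff_true, if_true]
      ring
    · rw [comp 0 4 (by norm_num) 1 1 1 1 (fun ξ => by ring), pdk_ang04]
      simp only [e00, e01, e10, e11, eq_self_iff_true, if_true]
      ring
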